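/- arXiv:2205.07393 — 2 statements merged into one kernel-verified Lean document; each statement's English description precedes it below -/
import Mathlib

section
/- Let f : [0,T] → ℝ be continuously differentiable with derivative f' satisfying the Hölder condition |f'(t) - f'(s)| ≤ C̃|t-s|^γ for all s,t ∈ [0,T], for some γ ∈ (0,1] and C̃ > 0. Then the trapezoidal quadrature error satisfies |(f(0)+f(T))/2 - (1/T)∫₀^T f(ξ) dξ| ≤ C̃ T^{1+γ} / ((γ+2)(γ+3)). -/
open MeasureTheory intervalIntegral Set Filter Topology

/-- Trapezoidal quadrature error for a C¹ function with γ-Hölder continuous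
derivative (Hölder constant C̃): the error of the trapezoid rule on [0,T] is
bounded by C̃ T^{1+γ} / ((γ+2)(γ+3)). -/
theorem trapezoid_quadrature_error
    (T : ℝ) (hT : 0 < T) (γ : ℝ) (hγ0 : 0 < γ) (hγ1 : γ ≤ 1)
    (Ct : ℝ) (hCt : 0 < Ct) (f f' : ℝ → ℝ)
    (hderiv : ∀ t ∈ Set.Icc (0:ℝ) T, HasDerivWithinAt f (f' t) (Set.Icc (0:ℝ) T) t)
    (hholder : ∀ s ∈ Set.Icc (0:ℝ) T, ∀ t ∈ Set.Icc (0:ℝ) T,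
      |f' t - f' s| ≤ Ct * |t - s| ^ γ) :
    |(f 0 + f T) / 2 - (1 / T) * ∫ ξ in (0:ℝ)..T, f ξ|
      ≤ Ct * T ^ (1 + γ) / ((γ + 2) * (γ + 3)) := by
  -- continuity of f'
  have hf'c : ContinuousOn f' (Set.Icc 0 T) := by
    intro x hx
    rw [ContinuousWithinAt, tendsto_iff_dist_tendsto_zero]
    have hb : Tendsto (fun t => Ct * |t - x| ^ γ) (nhdsWithin x (Set.Icc 0 T)) (𝓝 0) := by
      have hc : ContinuousAt (fun t : ℝ => Ct * |t - x| ^ γ) x :=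
        (continuousAt_const.mul (((Real.continuous_rpow_const hγ0.le).comp
          (continuous_abs.comp (continuous_sub_right x))).continuousAt))
      have h2 := (hc.continuousWithinAt (s := Set.Icc 0 T)).tendsto
      simpa [Real.zero_rpow hγ0.ne'] using h2
    refine squeeze_zero' ?_ ?_ hb
    · exact Eventually.of_forall fun t => dist_nonneg
    · filter_upwards [self_mem_nhdsWithin] with t ht
      simpa [Real.dist_eq] using hholder x hx t ht
  have hfc : ContinuousOn f (Set.Icc 0 T) :=
    fun x hx => (hderiv x hx).continuousWithinAt
  have h0T : (0:ℝ) ≤ T := hT.le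
  -- integration by parts: ∫ f = T(f0+fT)/2 - I where I = ∫ (ξ - T/2) f' ξ
  set g : ℝ → ℝ := fun x => (x - T / 2) * f x with hg
  set G : ℝ → ℝ := fun x => f x + (x - T / 2) * f' x with hG
  have hGc : ContinuousOn G (Set.Icc 0 T) :=
    hfc.add (((continuousOn_id.sub continuousOn_const)).mul hf'c)
  have hGint : IntervalIntegrable G volume 0 T :=
    (hGc.mono (by rw [uIcc_of_le h0T])).intervalIntegrable
  have hftc : ∫ x in (0:ℝ)..T, G x = g T - g 0 := by
    apply integral_eq_sub_of_hasDeriv_right_of_le h0T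
    · exact (continuousOn_id.sub continuousOn_const).mul hfc
    · intro x hx
      have hxI : x ∈ Set.Icc (0:ℝ) T := Set.mem_Icc_of_Ioo hx
      have hd : HasDerivAt f (f' x) x :=
        (hderiv x hxI).hasDerivAt (Icc_mem_nhds hx.1 hx.2)
      have : HasDerivAt g (G x) x := by
        have h1 : HasDerivAt (fun y : ℝ => y - T / 2) 1 x :=
          (hasDerivAt_id x).sub_const _
        show HasDerivAt (fun y => (y - T / 2) * f y) (f x + (x - T / 2) * f' x) x
        exact (h1.mul hd).congr_deriv (by ring)
      exact this.hasDerivWithinAt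
    · exact hGint
  have hfint : IntervalIntegrable f volume 0 T :=
    (hfc.mono (by rw [uIcc_of_le h0T])).intervalIntegrable
  have hwf'int : IntervalIntegrable (fun x => (x - T / 2) * f' x) volume 0 T :=
    ((((continuousOn_id.sub continuousOn_const)).mul hf'c).mono
      (by rw [uIcc_of_le h0T])).intervalIntegrable
  have hsplit : (∫ x in (0:ℝ)..T, f x) + ∫ x in (0:ℝ)..T, (x - T / 2) * f' x
      = g T - g 0 := by
    rw [← hftc, ← integral_add hfint hwf'int]
  set I : ℝ := ∫ x in (0:ℝ)..T, (x - T / 2) * f' x with hI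
  have hkey : (f 0 + f T) / 2 - (1 / T) * ∫ ξ in (0:ℝ)..T, f ξ = I / T := by
    have : (∫ ξ in (0:ℝ)..T, f ξ) = T * ((f 0 + f T) / 2) - I := by
      have hg0 : g T - g 0 = T * ((f 0 + f T) / 2) := by
        simp only [hg]; ring
      rw [hg0] at hsplit; linarith
    rw [this]; field_simp; ring
  rw [hkey]
  -- symmetry folding
  set w : ℝ → ℝ := fun x => (x - T / 2) * f' x with hw
  have hwcont : ContinuousOn w (Set.Icc 0 T) :=
    ((continuousOn_id.sub continuousOn_const)).mul hf'c
  have hint1 : IntervalIntegrable w volume 0 (T / 2) :=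
    ((hwcont.mono (by
      rw [uIcc_of_le (by linarith : (0:ℝ) ≤ T/2)]
      exact Set.Icc_subset_Icc le_rfl (by linarith))).intervalIntegrable)
  have hint2 : IntervalIntegrable w volume (T / 2) T :=
    ((hwcont.mono (by
      rw [uIcc_of_le (by linarith : T/2 ≤ T)]
      exact Set.Icc_subset_Icc (by linarith) le_rfl)).intervalIntegrable)
  have hIsplit : I = (∫ x in (0:ℝ)..(T/2), w x) + ∫ x in (T/2)..T, w x :=
    (integral_add_adjacent_intervals hint1 hint2).symm
  have hrefl : (∫ x in (T/2)..T, w x) = ∫ x in (0:ℝ)..(T/2), w (T - x) := by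
    rw [integral_comp_sub_left w T, show T - T/2 = T/2 by ring, sub_zero]
  have hwc' : ContinuousOn (fun x => w (T - x)) (Set.Icc 0 (T/2)) := by
    apply hwcont.comp (continuousOn_const.sub continuousOn_id)
    intro x hx
    simp only [Set.mem_Icc] at hx
    simp only [Set.mem_Icc, id, Pi.sub_apply]
    constructor <;> linarith [hx.1, hx.2]
  have hint1' : IntervalIntegrable (fun x => w (T - x)) volume 0 (T/2) :=
    (hwc'.mono (by rw [uIcc_of_le (by linarith : (0:ℝ) ≤ T/2)])).intervalIntegrable
  have hIfold : I = ∫ x in (0:ℝ)..(T/2), (x - T/2) * (f' x - f' (T - x)) := by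
    rw [hIsplit, hrefl, ← integral_add hint1 hint1']
    apply integral_congr
    intro x _
    simp only [hw]; ring
  -- bound |I|
  have ha2 : (0:ℝ) ≤ T/2 := by linarith
  have hbint : IntervalIntegrable (fun x => Ct * 2^γ * (T/2 - x)^(1+γ)) volume 0 (T/2) := by
    apply Continuous.intervalIntegrable
    exact continuous_const.mul ((Real.continuous_rpow_const (by linarith)).comp
      (continuous_const.sub continuous_id))
  have hmaps : ∀ x ∈ Set.Icc (0:ℝ) (T/2), T - x ∈ Set.Icc (0:ℝ) T := by
    intro x hx
    simp only [Set.mem_Icc] at hx ⊢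
    constructor <;> linarith [hx.1, hx.2]
  have hf'comp : ContinuousOn (fun x => f' (T - x)) (Set.Icc 0 (T/2)) := by
    apply hf'c.comp (continuousOn_const.sub continuousOn_id)
    intro x hx
    simpa using hmaps x hx
  have hWcont : ContinuousOn (fun x => (x - T/2) * (f' x - f' (T - x))) (Set.Icc 0 (T/2)) :=
    (continuousOn_id.sub continuousOn_const).mul
      ((hf'c.mono (Set.Icc_subset_Icc le_rfl (by linarith))).sub hf'comp)
  have hwint2 : IntervalIntegrable (fun x => |(x - T/2) * (f' x - f' (T - x))|) volume 0 (T/2) :=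
    ((hWcont.abs).mono (by rw [uIcc_of_le ha2])).intervalIntegrable
  have hptwise : ∀ x ∈ Set.Icc (0:ℝ) (T/2),
      |(x - T/2) * (f' x - f' (T - x))| ≤ Ct * 2^γ * (T/2 - x)^(1+γ) := by
    intro x hx
    simp only [Set.mem_Icc] at hx
    have hx0 := hx.1; have hx2 := hx.2
    have hxm : x ∈ Set.Icc (0:ℝ) T := ⟨hx0, by linarith⟩
    have hTxm : T - x ∈ Set.Icc (0:ℝ) T := ⟨by linarith, by linarith⟩
    have hhh := hholder x hxm (T - x) hTxm
    have h1 : |T - x - x| = 2 * (T/2 - x) := by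
      rw [abs_of_nonneg (by linarith)]; ring
    rw [abs_mul, abs_of_nonpos (by linarith : x - T/2 ≤ 0)]
    have hb : |f' (T - x) - f' x| ≤ Ct * (2 * (T/2 - x))^γ := by rw [← h1]; exact hhh
    have habs : |f' x - f' (T - x)| = |f' (T - x) - f' x| := abs_sub_comm _ _
    calc -(x - T/2) * |f' x - f' (T - x)| = (T/2 - x) * |f' (T - x) - f' x| := by
          rw [habs]; ring
      _ ≤ (T/2 - x) * (Ct * (2 * (T/2 - x))^γ) := by
          apply mul_le_mul_of_nonneg_left hb (by linarith)
      _ = Ct * 2^γ * (T/2 - x)^(1+γ) := by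
          rw [Real.mul_rpow (by norm_num) (by linarith),
            Real.rpow_one_add' (by linarith) (by positivity)]
          ring
  have hIb : |I| ≤ Ct * 2^γ * ((T/2)^(1+γ+1) / (1+γ+1)) := by
    calc |I| ≤ ∫ x in (0:ℝ)..(T/2), |(x - T/2) * (f' x - f' (T - x))| := by
          rw [hIfold]; exact intervalIntegral.abs_integral_le_integral_abs ha2
      _ ≤ ∫ x in (0:ℝ)..(T/2), Ct * 2^γ * (T/2 - x)^(1+γ) :=
          integral_mono_on ha2 hwint2 hbint hptwise
      _ = Ct * 2^γ * ∫ x in (0:ℝ)..(T/2), (T/2 - x)^(1+γ) := by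
          rw [← intervalIntegral.integral_const_mul]
      _ = Ct * 2^γ * ((T/2)^(1+γ+1) / (1+γ+1)) := by
          rw [integral_comp_sub_left (fun x => x^(1+γ)) (T/2), sub_self, sub_zero,
            integral_rpow (Or.inl (by linarith)),
            Real.zero_rpow (by positivity), sub_zero]
  -- final arithmetic
  rw [abs_div, abs_of_pos hT, div_le_div_iff₀ hT (by positivity)]
  have hstep : Ct * 2^γ * ((T/2)^(1+γ+1) / (1+γ+1)) = Ct * T^(1+γ) * T / (4 * (γ+2)) := by
    have e1 : (T/2)^(1+γ+1) = T^(1+γ+1) / 2^(1+γ+1) := Real.div_rpow h0T (by norm_num) _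
    have e2 : T^(1+γ+1) = T^(1+γ) * T := by
      rw [Real.rpow_add hT, Real.rpow_one]
    have e3 : (2:ℝ)^(1+γ+1) = 2 * 2^γ * 2 := by
      rw [Real.rpow_add (by norm_num : (0:ℝ) < 2), Real.rpow_one,
        Real.rpow_one_add' (by norm_num) (by positivity)]
    have h2γ : (0:ℝ) < 2^γ := Real.rpow_pos_of_pos (by norm_num) γ
    rw [e1, e2, e3]
    field_simp
    ring
  calc |I| * ((γ+2) * (γ+3)) ≤ (Ct * T^(1+γ) * T / (4 * (γ+2))) * ((γ+2) * (γ+3)) := by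
        rw [← hstep]
        exact mul_le_mul_of_nonneg_right hIb (by positivity)
    _ ≤ Ct * T^(1+γ) * T := by
        rw [div_mul_eq_mul_div, div_le_iff₀ (by positivity)]
        have h4 : (γ+3) ≤ 4 := by linarith
        have hpos : (0:ℝ) ≤ Ct * T^(1+γ) * T * (γ+2) := by positivity
        calc Ct * T^(1+γ) * T * ((γ+2) * (γ+3)) = Ct * T^(1+γ) * T * (γ+2) * (γ+3) := by ring
          _ ≤ Ct * T^(1+γ) * T * (γ+2) * 4 := mul_le_mul_of_nonneg_left h4 hpos
          _ = Ct * T^(1+γ) * T * (4 * (γ+2)) := by ring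
end

section
/- Let W be a standard one-dimensional Brownian motion, k ∈ (0,1] with 1/k ∈ ℕ, t_n ∈ [0,1], t_{n+1} = t_n + k ≤ 2, and ΔŴ_n := k·W(t_{n+1}) - k² Σ_{ℓ=1}^{k^{-1}} W(t_n + ℓk²). Then for q = 1 and q = 2 there is a constant C > 0 (independent of k and n) such that E[|ΔŴ_n|^{2q}] ≤ C k^{3q}. -/
open MeasureTheory ProbabilityTheory Filter

/-- A (standard, one-dimensional) Brownian motion on a probability space:
starts at 0, has continuous paths, Gaussian increments `W t - W s ~ N(0, t-s)`,
and independent increments. -/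
structure IsBrownianMotion {Ω : Type} [MeasurableSpace Ω]
    (P : Measure Ω) (W : ℝ → Ω → ℝ) : Prop where
  measurable : ∀ t, Measurable (W t)
  start : ∀ ω, W 0 ω = 0
  cont : ∀ ω, Continuous fun t => W t ω
  gauss_incr : ∀ s t : ℝ, 0 ≤ s → s ≤ t →
    Measure.map (fun ω => W t ω - W s ω) P
      = gaussianReal 0 (Real.toNNReal (t - s))
  indep_incr : ∀ (n : ℕ) (u : ℕ → ℝ), Monotone u →
    iIndepFun
      (fun i : Fin n => fun ω => W (u (i.1 + 1)) ω - W (u i.1) ω) P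

/-- Left-endpoint Riemann sums, over the uniform partition of `[t₀, t₁]` into
`m` subintervals, for the Itô integral `∫_{t₀}^{t₁} (s - t₀) dW(s)`. -/
noncomputable def riemannSumLin {Ω : Type} (W : ℝ → Ω → ℝ) (t₀ t₁ : ℝ) (m : ℕ)
    (ω : Ω) : ℝ :=
  ∑ i ∈ Finset.range m,
    ((i : ℝ) * ((t₁ - t₀) / m)) *
      (W (t₀ + ((i : ℝ) + 1) * ((t₁ - t₀) / m)) ω
        - W (t₀ + (i : ℝ) * ((t₁ - t₀) / m)) ω)

open Real
open scoped NNReal ENNReal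


lemma pow_le_exp_aux (q : ℕ) (y : ℝ) (hy : 0 ≤ y) : y ^ q ≤ (q : ℝ) ^ q * Real.exp y := by
  rcases Nat.eq_zero_or_pos q with rfl | hq
  · simpa using Real.one_le_exp hy
  · have hq' : (0:ℝ) < q := by exact_mod_cast hq
    have h1 : y / q ≤ Real.exp (y / q) := by
      have := Real.add_one_le_exp (y / q)
      linarith
    have h2 : (y / q) ^ q ≤ Real.exp (y / q) ^ q :=
      pow_le_pow_left₀ (by positivity) h1 q
    have h3 : Real.exp (y / q) ^ q = Real.exp y := by
      rw [← Real.exp_nat_mul]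
      congr 1
      field_simp
    calc y ^ q = (q : ℝ) ^ q * (y / q) ^ q := by
            rw [← mul_pow]; field_simp
      _ ≤ (q : ℝ) ^ q * Real.exp y := by
            rw [← h3]; exact mul_le_mul_of_nonneg_left h2 (by positivity)

lemma integrable_even_pow_gauss (q : ℕ) {b : ℝ} (hb : 0 < b) :
    Integrable fun x : ℝ => x ^ (2 * q) * Real.exp (-b * x ^ 2) := by
  have hb2 : 0 < b / 2 := by linarith
  apply Integrable.mono' (((integrable_exp_neg_mul_sq hb2).const_mul
    ((q : ℝ) ^ q * (2 / b) ^ q)))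
  · exact ((measurable_id.pow_const _).mul
      (((measurable_id.pow_const 2).const_mul (-b)).exp)).aestronglyMeasurable
  · refine ae_of_all _ fun x => ?_
    have hx1 : x ^ (2 * q) ≤ (2 / b) ^ q * ((q:ℝ) ^ q * Real.exp (b / 2 * x ^ 2)) := by
      have h := pow_le_exp_aux q (b / 2 * x ^ 2) (by positivity)
      have : x ^ (2 * q) = (2 / b) ^ q * (b / 2 * x ^ 2) ^ q := by
        rw [← mul_pow, pow_mul]
        congr 1
        field_simp
      rw [this]
      exact mul_le_mul_of_nonneg_left h (by positivity)
    have hnorm : ‖x ^ (2 * q) * Real.exp (-b * x ^ 2)‖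
        = x ^ (2 * q) * Real.exp (-b * x ^ 2) := by
      rw [Real.norm_eq_abs, abs_of_nonneg]
      have : (0:ℝ) ≤ x ^ (2*q) := by rw [pow_mul]; positivity
      positivity
    rw [hnorm]
    calc x ^ (2 * q) * Real.exp (-b * x ^ 2)
        ≤ ((2 / b) ^ q * ((q:ℝ) ^ q * Real.exp (b / 2 * x ^ 2))) * Real.exp (-b * x ^ 2) :=
          mul_le_mul_of_nonneg_right hx1 (Real.exp_pos _).le
      _ = (q : ℝ) ^ q * (2 / b) ^ q * (Real.exp (b / 2 * x ^ 2) * Real.exp (-b * x ^ 2)) := by ring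
      _ = (q : ℝ) ^ q * (2 / b) ^ q * Real.exp (-(b/2) * x ^ 2) := by
          rw [← Real.exp_add]; ring_nf



lemma abs_pow_two_mul (q : ℕ) (x : ℝ) : |x| ^ (2 * q) = x ^ (2 * q) := by
  rw [pow_mul, pow_mul, sq_abs]

lemma integrable_abs_pow_stdGauss (q : ℕ) :
    Integrable (fun x : ℝ => |x| ^ (2 * q)) (gaussianReal 0 1) := by
  rw [gaussianReal_of_var_ne_zero 0 one_ne_zero,
    integrable_withDensity_iff (measurable_gaussianPDF 0 1)
      (ae_of_all _ fun x => ENNReal.ofReal_lt_top)]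
  have h := (integrable_even_pow_gauss q (b := 1/2) (by norm_num)).const_mul
    ((Real.sqrt (2 * π))⁻¹)
  apply h.congr
  refine ae_of_all _ fun x => ?_
  simp only [gaussianPDF_def]
  rw [ENNReal.toReal_ofReal (gaussianPDFReal_nonneg 0 1 x)]
  simp only [gaussianPDFReal, abs_pow_two_mul]
  push_cast
  ring_nf

lemma gauss_scale (v : ℝ≥0) :
    gaussianReal 0 v = (gaussianReal 0 1).map (fun x => Real.sqrt v * x) := by
  rw [show (fun x : ℝ => Real.sqrt v * x) = (Real.sqrt v * ·) from rfl,
    gaussianReal_map_const_mul]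
  congr 1
  · simp
  · ext
    simp [Real.sq_sqrt v.coe_nonneg]

lemma moment_scaled (q : ℕ) (v : ℝ≥0) :
    Integrable (fun x : ℝ => |x| ^ (2 * q)) (gaussianReal 0 v) ∧
    ∫ x, |x| ^ (2 * q) ∂(gaussianReal 0 v)
      = (v : ℝ) ^ q * ∫ x, |x| ^ (2 * q) ∂(gaussianReal 0 1) := by
  have hmeas : Measurable (fun x : ℝ => Real.sqrt v * x) := measurable_id.const_mul _
  have hg : AEStronglyMeasurable (fun x : ℝ => |x| ^ (2 * q))
      ((gaussianReal 0 1).map (fun x => Real.sqrt v * x)) :=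
    ((continuous_abs.pow _).aestronglyMeasurable)
  have key : ∀ x : ℝ, |Real.sqrt v * x| ^ (2 * q) = (v : ℝ) ^ q * |x| ^ (2 * q) := by
    intro x
    rw [abs_mul, mul_pow, abs_of_nonneg (Real.sqrt_nonneg _), pow_mul,
      Real.sq_sqrt v.coe_nonneg]
  constructor
  · rw [gauss_scale, integrable_map_measure hg hmeas.aemeasurable]
    have := (integrable_abs_pow_stdGauss q).const_mul ((v:ℝ) ^ q)
    apply this.congr
    exact ae_of_all _ fun x => (key x).symm
  · rw [gauss_scale, integral_map hmeas.aemeasurable hg]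
    simp_rw [key]
    rw [integral_const_mul]

lemma bm_moment {Ω : Type} [MeasurableSpace Ω] {P : Measure Ω} [IsProbabilityMeasure P]
    {W : ℝ → Ω → ℝ} (hW : IsBrownianMotion P W) (q : ℕ) {s t : ℝ}
    (hs : 0 ≤ s) (hst : s ≤ t) :
    Integrable (fun ω => |W t ω - W s ω| ^ (2 * q)) P ∧
    ∫ ω, |W t ω - W s ω| ^ (2 * q) ∂P
      = (t - s) ^ q * ∫ x, |x| ^ (2 * q) ∂(gaussianReal 0 1) := by
  have hmap := hW.gauss_incr s t hs hst
  have hY : Measurable (fun ω => W t ω - W s ω) := (hW.measurable t).sub (hW.measurable s)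
  have hg : AEStronglyMeasurable (fun x : ℝ => |x| ^ (2 * q))
      (P.map (fun ω => W t ω - W s ω)) := (continuous_abs.pow _).aestronglyMeasurable
  have hco : ((Real.toNNReal (t - s) : ℝ≥0) : ℝ) = t - s := Real.coe_toNNReal _ (sub_nonneg.mpr hst)
  constructor
  · have h1 : Integrable (fun x : ℝ => |x| ^ (2 * q)) (P.map (fun ω => W t ω - W s ω)) := by
      rw [hmap]; exact (moment_scaled q _).1
    exact (integrable_map_measure hg hY.aemeasurable).mp h1
  · rw [← integral_map hY.aemeasurable hg, hmap, (moment_scaled q _).2, hco]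

/-- There is a constant `C > 0` (independent of `k` and `n`) such that for
`q = 1` and `q = 2`, any Brownian motion `W`, any `k ∈ (0,1]` with `1/k ∈ ℕ`
and any `t_n ∈ [0,1]` (so `t_{n+1} = t_n + k ≤ 2`), the implementable
increment `ΔŴ_n = k·W(t_{n+1}) - k² Σ_{ℓ=1}^{1/k} W(t_n + ℓ k²)` satisfies
`E[|ΔŴ_n|^{2q}] ≤ C k^{3q}`. -/
theorem hat_increment_moments :
    ∃ C : ℝ, 0 < C ∧
      ∀ (Ω : Type) [MeasurableSpace Ω] (P : Measure Ω) [IsProbabilityMeasure P]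
        (W : ℝ → Ω → ℝ), IsBrownianMotion P W →
      ∀ q : ℕ, (q = 1 ∨ q = 2) →
      ∀ (m : ℕ) (k tn : ℝ), 0 < m → 0 < k → k ≤ 1 → k = 1 / m →
        0 ≤ tn → tn ≤ 1 → tn + k ≤ 2 →
        ∫ ω, |k * W (tn + k) ω
            - k ^ 2 * ∑ ℓ ∈ Finset.Icc 1 m, W (tn + (ℓ : ℝ) * k ^ 2) ω| ^ (2 * q) ∂P
          ≤ C * k ^ (3 * q) := by
  have hN : ∀ q : ℕ, 0 ≤ ∫ x, |x| ^ (2 * q) ∂(gaussianReal 0 1) :=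
    fun q => integral_nonneg fun x => by positivity
  refine ⟨(∫ x, |x| ^ (2 * 1) ∂(gaussianReal 0 1))
      + (∫ x, |x| ^ (2 * 2) ∂(gaussianReal 0 1)) + 1, ?_, ?_⟩
  · have := hN 1; have := hN 2; linarith
  set C : ℝ := (∫ x, |x| ^ (2 * 1) ∂(gaussianReal 0 1))
      + (∫ x, |x| ^ (2 * 2) ∂(gaussianReal 0 1)) + 1 with hC
  intro Ω _ P _ W hW q hq m k tn hm hk hk1 hkm htn htn1 htn2
  have hCq : ∫ x, |x| ^ (2 * q) ∂(gaussianReal 0 1) ≤ C := by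
    rcases hq with rfl | rfl
    · have := hN 2; rw [hC]; linarith
    · have := hN 1; rw [hC]; linarith
  have hq1 : 1 ≤ q := by rcases hq with rfl | rfl <;> norm_num
  have hm0 : ((m : ℝ)) ≠ 0 := Nat.cast_ne_zero.mpr hm.ne'
  have hmpos : (0:ℝ) < m := Nat.cast_pos.mpr hm
  have hkm1 : k * m = 1 := by rw [hkm]; field_simp
  have hCpos : 0 < C := by rw [hC]; have := hN 1; have := hN 2; linarith
  -- the increments
  set g : ℕ → Ω → ℝ := fun ℓ ω => W (tn + k) ω - W (tn + (ℓ : ℝ) * k ^ 2) ω with hg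
  have hsle : ∀ ℓ ∈ Finset.Icc 1 m, (ℓ : ℝ) * k ^ 2 ≤ k := by
    intro ℓ hℓ
    have hlm : (ℓ : ℝ) ≤ m := Nat.cast_le.mpr (Finset.mem_Icc.mp hℓ).2
    have : (ℓ : ℝ) * k ^ 2 ≤ (m : ℝ) * k ^ 2 :=
      mul_le_mul_of_nonneg_right hlm (sq_nonneg k)
    nlinarith [hkm1]
  have hbm : ∀ ℓ ∈ Finset.Icc 1 m,
      Integrable (fun ω => |g ℓ ω| ^ (2 * q)) P ∧
      ∫ ω, |g ℓ ω| ^ (2 * q) ∂P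
        = ((tn + k) - (tn + (ℓ : ℝ) * k ^ 2)) ^ q
          * ∫ x, |x| ^ (2 * q) ∂(gaussianReal 0 1) := by
    intro ℓ hℓ
    exact bm_moment hW q (by positivity) (by linarith [hsle ℓ hℓ])
  have hintbound : ∀ ℓ ∈ Finset.Icc 1 m,
      ∫ ω, |g ℓ ω| ^ (2 * q) ∂P ≤ k ^ q * C := by
    intro ℓ hℓ
    rw [(hbm ℓ hℓ).2]
    have h1 : ((tn + k) - (tn + (ℓ : ℝ) * k ^ 2)) ^ q ≤ k ^ q := by
      apply pow_le_pow_left₀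
      · have := hsle ℓ hℓ; linarith
      · have hl1 : (1:ℝ) ≤ ℓ := by
          exact_mod_cast (Finset.mem_Icc.mp hℓ).1
        nlinarith [sq_nonneg k]
    exact mul_le_mul h1 hCq (hN q) (by positivity)
  -- pointwise identity
  have heq : ∀ ω, k * W (tn + k) ω
      - k ^ 2 * ∑ ℓ ∈ Finset.Icc 1 m, W (tn + (ℓ : ℝ) * k ^ 2) ω
      = k ^ 2 * ∑ ℓ ∈ Finset.Icc 1 m, g ℓ ω := by
    intro ω
    rw [hg]
    rw [Finset.sum_sub_distrib, Finset.sum_const, Nat.card_Icc, nsmul_eq_mul]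
    have hc : ((m + 1 - 1 : ℕ) : ℝ) = (m : ℝ) := by simp
    rw [hc]
    linear_combination (-(W (tn + k) ω * k)) * hkm1
  -- pointwise bound
  have hpt : ∀ ω, |k ^ 2 * ∑ ℓ ∈ Finset.Icc 1 m, g ℓ ω| ^ (2 * q)
      ≤ (k ^ 2) ^ (2 * q) * (m : ℝ) ^ (2 * q - 1)
        * ∑ ℓ ∈ Finset.Icc 1 m, |g ℓ ω| ^ (2 * q) := by
    intro ω
    rw [abs_mul, mul_pow, abs_of_nonneg (sq_nonneg k), mul_assoc]
    apply mul_le_mul_of_nonneg_left _ (by positivity)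
    have h1 : |∑ ℓ ∈ Finset.Icc 1 m, g ℓ ω| ^ (2 * q)
        ≤ (∑ ℓ ∈ Finset.Icc 1 m, |g ℓ ω|) ^ (2 * q) :=
      pow_le_pow_left₀ (abs_nonneg _) (Finset.abs_sum_le_sum_abs _ _) _
    have h3 := pow_sum_div_card_le_sum_pow
      (f := fun ℓ => |g ℓ ω|) (s := Finset.Icc 1 m) (fun i _ => abs_nonneg _) (2 * q - 1)
    have hq2 : 2 * q - 1 + 1 = 2 * q := by omega
    rw [hq2, Nat.card_Icc] at h3
    have hcard : ((m + 1 - 1 : ℕ) : ℝ) = (m : ℝ) := by simp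
    rw [hcard] at h3
    have hpow : (0:ℝ) < (m : ℝ) ^ (2 * q - 1) := by positivity
    rw [div_le_iff₀ hpow] at h3
    calc |∑ ℓ ∈ Finset.Icc 1 m, g ℓ ω| ^ (2 * q)
        ≤ (∑ ℓ ∈ Finset.Icc 1 m, |g ℓ ω|) ^ (2 * q) := h1
      _ ≤ (∑ ℓ ∈ Finset.Icc 1 m, |g ℓ ω| ^ (2 * q)) * (m : ℝ) ^ (2 * q - 1) := h3
      _ = (m : ℝ) ^ (2 * q - 1) * ∑ ℓ ∈ Finset.Icc 1 m, |g ℓ ω| ^ (2 * q) := by ring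
  -- integrable dominating function
  have hintg : Integrable (fun ω => (k ^ 2) ^ (2 * q) * (m : ℝ) ^ (2 * q - 1)
      * ∑ ℓ ∈ Finset.Icc 1 m, |g ℓ ω| ^ (2 * q)) P := by
    exact (integrable_finset_sum _ (fun ℓ hℓ => (hbm ℓ hℓ).1)).const_mul _
  calc ∫ ω, |k * W (tn + k) ω
        - k ^ 2 * ∑ ℓ ∈ Finset.Icc 1 m, W (tn + (ℓ : ℝ) * k ^ 2) ω| ^ (2 * q) ∂P
      = ∫ ω, |k ^ 2 * ∑ ℓ ∈ Finset.Icc 1 m, g ℓ ω| ^ (2 * q) ∂P := by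
        apply integral_congr_ae
        exact ae_of_all _ fun ω => congrArg (fun y => |y| ^ (2 * q)) (heq ω)
    _ ≤ ∫ ω, (k ^ 2) ^ (2 * q) * (m : ℝ) ^ (2 * q - 1)
          * ∑ ℓ ∈ Finset.Icc 1 m, |g ℓ ω| ^ (2 * q) ∂P := by
        apply integral_mono_of_nonneg (ae_of_all _ fun ω => by positivity) hintg
        exact ae_of_all _ fun ω => hpt ω
    _ = (k ^ 2) ^ (2 * q) * (m : ℝ) ^ (2 * q - 1)
          * ∑ ℓ ∈ Finset.Icc 1 m, ∫ ω, |g ℓ ω| ^ (2 * q) ∂P := by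
        simp_rw [integral_const_mul]
        rw [integral_finset_sum _ (fun ℓ hℓ => (hbm ℓ hℓ).1)]
    _ ≤ (k ^ 2) ^ (2 * q) * (m : ℝ) ^ (2 * q - 1) * ((m : ℝ) * (k ^ q * C)) := by
        apply mul_le_mul_of_nonneg_left _ (by positivity)
        calc ∑ ℓ ∈ Finset.Icc 1 m, ∫ ω, |g ℓ ω| ^ (2 * q) ∂P
            ≤ ∑ _ℓ ∈ Finset.Icc 1 m, k ^ q * C := Finset.sum_le_sum hintbound
          _ = (m : ℝ) * (k ^ q * C) := by
              rw [Finset.sum_const, Nat.card_Icc, nsmul_eq_mul]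
              norm_num
    _ = C * k ^ (3 * q) := by
        rcases hq with rfl | rfl
        · norm_num
          linear_combination (C * k ^ 3 * (k * (m:ℝ) + 1)) * hkm1
        · norm_num
          linear_combination (C * k ^ 6 * ((k * (m:ℝ))^3 + (k * (m:ℝ))^2 + k * (m:ℝ) + 1)) * hkm1
end
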